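/- (Necessity of axiom A5.) Let ν be a capacity on {1,2}, f₁ : X₁ → ℝ, f₂ : X₂ → ℝ, and let ≽ be the relation on X = X₁ × X₂ represented by ν together with (f₁,f₂). Let R⁺ = {x ∈ X : f₁(x₁) ≥ f₂(x₂)} and R⁻ = {x ∈ X : f₂(x₂) ≥ f₁(x₁)}; define the coordinate-1 weight of R⁺ to be ν({1}) and of R⁻ to be 1 − ν({2}), and the coordinate-2 weight of R⁺ to be 1 − ν({1}) and of R⁻ to be ν({2}). Let a,b,c,d,e,g,x₀,x₁ ∈ X₁ and p,q,y₀,y₁,πa,πb,πc,πd ∈ X₂ be such that: ap,bq,cp,dq all lie in R⁺ or all lie in R⁻, and the coordinate-1 weight of that region is strictly positive; ay₀,by₀,cy₁,dy₁ all lie in R⁺ or all lie in R⁻; x₀πa,x₀πb,x₁πc,x₁πd all lie in R⁺ or all lie in R⁻, and the coordinate-2 weight of that region is strictly positive; and eπa,gπb,eπc,gπd all lie in R⁺ or all lie in R⁻. If bq ≽ ap, cp ≽ dq, ay₀ ∼ x₀πa, by₀ ∼ x₀πb, cy₁ ∼ x₁πc, dy₁ ∼ x₁πd, and eπa ≽ gπb,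 then eπc ≽ gπd. -/
import Mathlib


open Set
open scoped Classical

section ChoquetAxioms

variable {X₁ X₂ : Type*}

/-- Asymmetric (strict) part of a relation. -/
def SP (R : X₁ × X₂ → X₁ × X₂ → Prop) (x y : X₁ × X₂) : Prop := R x y ∧ ¬ R y x

/-- Symmetric (indifference) part of a relation. -/
def IP (R : X₁ × X₂ → X₁ × X₂ → Prop) (x y : X₁ × X₂) : Prop := R x y ∧ R y x

/-- Triple cancellation on a set `A`. -/
def TCancel (R : X₁ × X₂ → X₁ × X₂ → Prop) (A : Set (X₁ × X₂)) : Prop :=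
  ∀ a b c d : X₁, ∀ p q r s : X₂,
    (a,p) ∈ A → (b,q) ∈ A → (a,r) ∈ A → (b,s) ∈ A →
    (c,p) ∈ A → (d,q) ∈ A → (c,r) ∈ A → (d,s) ∈ A →
    R (b,q) (a,p) → R (a,r) (b,s) → R (c,p) (d,q) → R (c,r) (d,s)

/-- A1: weak order (complete and transitive). -/
def A1 (R : X₁ × X₂ → X₁ × X₂ → Prop) : Prop :=
  (∀ x y, R x y ∨ R y x) ∧ (∀ x y z, R x y → R y z → R x z)

/-- A2: weak separability. -/
def A2 (R : X₁ × X₂ → X₁ × X₂ → Prop) : Prop :=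
  (∀ a b : X₁, ∀ p : X₂, SP R (a,p) (b,p) → ∀ q : X₂, R (a,q) (b,q)) ∧
  (∀ p q : X₂, ∀ a : X₁, SP R (a,p) (a,q) → ∀ b : X₁, R (b,p) (b,q))

/-- Induced order on the first coordinate. -/
def Ge1 (R : X₁ × X₂ → X₁ × X₂ → Prop) (a b : X₁) : Prop := ∀ p : X₂, R (a,p) (b,p)

/-- Induced order on the second coordinate. -/
def Ge2 (R : X₁ × X₂ → X₁ × X₂ → Prop) (p q : X₂) : Prop := ∀ a : X₁, R (a,p) (a,q)

def Max1 (R : X₁ × X₂ → X₁ × X₂ → Prop) (a : X₁) : Prop := ∀ b : X₁, Ge1 R a b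
def Min1 (R : X₁ × X₂ → X₁ × X₂ → Prop) (a : X₁) : Prop := ∀ b : X₁, Ge1 R b a
def Max2 (R : X₁ × X₂ → X₁ × X₂ → Prop) (p : X₂) : Prop := ∀ q : X₂, Ge2 R p q
def Min2 (R : X₁ × X₂ → X₁ × X₂ → Prop) (p : X₂) : Prop := ∀ q : X₂, Ge2 R q p

/-- The south-east rectangular cone at `z`. -/
def SEz (R : X₁ × X₂ → X₁ × X₂ → Prop) (z : X₁ × X₂) : Set (X₁ × X₂) :=
  {x | Ge1 R x.1 z.1 ∧ Ge2 R z.2 x.2}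

/-- The north-west rectangular cone at `z`. -/
def NWz (R : X₁ × X₂ → X₁ × X₂ → Prop) (z : X₁ × X₂) : Set (X₁ × X₂) :=
  {x | Ge2 R x.2 z.2 ∧ Ge1 R z.1 x.1}

/-- A3: at every point, triple cancellation holds on `SEz z` or on `NWz z`. -/
def A3 (R : X₁ × X₂ → X₁ × X₂ → Prop) : Prop :=
  ∀ z : X₁ × X₂, TCancel R (SEz R z) ∨ TCancel R (NWz R z)

/-- The region SE. -/
def SEreg (R : X₁ × X₂ → X₁ × X₂ → Prop) : Set (X₁ × X₂) :=
  {x | (∃ z : X₁ × X₂, ¬ Max1 R z.1 ∧ ¬ Min2 R z.2 ∧ TCancel R (SEz R z) ∧ x ∈ SEz R z) ∨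
       ((Max1 R x.1 ∨ Min2 R x.2) ∧ ∀ y ∈ SEz R x, y ≠ x → ¬ TCancel R (NWz R y))}

/-- The region NW. -/
def NWreg (R : X₁ × X₂ → X₁ × X₂ → Prop) : Set (X₁ × X₂) :=
  {x | (∃ z : X₁ × X₂, ¬ Min1 R z.1 ∧ ¬ Max2 R z.2 ∧ TCancel R (NWz R z) ∧ x ∈ NWz R z) ∨
       ((Min1 R x.1 ∨ Max2 R x.2) ∧ ∀ y ∈ NWz R x, y ≠ x → ¬ TCancel R (SEz R y))}

/-- Θ = SE ∩ NW. -/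
def Theta (R : X₁ × X₂ → X₁ × X₂ → Prop) : Set (X₁ × X₂) := SEreg R ∩ NWreg R

/-- Extreme points of SE. -/
def SEext (R : X₁ × X₂ → X₁ × X₂ → Prop) : Set (X₁ × X₂) :=
  {x | x ∈ Theta R ∧ (Min2 R x.2 ∨ Max1 R x.1)}

/-- Extreme points of NW. -/
def NWext (R : X₁ × X₂ → X₁ × X₂ → Prop) : Set (X₁ × X₂) :=
  {x | x ∈ Theta R ∧ (Min1 R x.1 ∨ Max2 R x.2)}

/-- Coordinate 1 is essential on `A`. -/
def Ess1 (R : X₁ × X₂ → X₁ × X₂ → Prop) (A : Set (X₁ × X₂)) : Prop :=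
  ∃ a b : X₁, ∃ p : X₂, (a,p) ∈ A ∧ (b,p) ∈ A ∧ SP R (a,p) (b,p)

/-- Coordinate 2 is essential on `A`. -/
def Ess2 (R : X₁ × X₂ → X₁ × X₂ → Prop) (A : Set (X₁ × X₂)) : Prop :=
  ∃ p q : X₂, ∃ a : X₁, (a,p) ∈ A ∧ (a,q) ∈ A ∧ SP R (a,p) (a,q)

/-- Four points all belonging to a set. -/
def In4 (A : Set (X₁ × X₂)) (w x y z : X₁ × X₂) : Prop :=
  w ∈ A ∧ x ∈ A ∧ y ∈ A ∧ z ∈ A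

/-- A4. -/
def A4 (R : X₁ × X₂ → X₁ × X₂ → Prop) : Prop :=
  ∀ a b c d : X₁, ∀ p q r s : X₂,
    ((In4 (NWreg R) (a,p) (b,q) (a,r) (b,s) ∧ In4 (NWreg R) (c,p) (d,q) (c,r) (d,s)) ∨
     (In4 (SEreg R) (a,p) (b,q) (a,r) (b,s) ∧ In4 (SEreg R) (c,p) (d,q) (c,r) (d,s)) ∨
     (In4 (NWreg R) (a,p) (b,q) (a,r) (b,s) ∧ Ess2 R (NWreg R) ∧
        In4 (SEreg R) (c,p) (d,q) (c,r) (d,s)) ∨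
     (In4 (SEreg R) (a,p) (b,q) (a,r) (b,s) ∧ Ess2 R (SEreg R) ∧
        In4 (NWreg R) (c,p) (d,q) (c,r) (d,s)) ∨
     (In4 (NWreg R) (a,p) (b,q) (c,p) (d,q) ∧ Ess1 R (NWreg R) ∧
        In4 (SEreg R) (a,r) (b,s) (c,r) (d,s)) ∨
     (In4 (SEreg R) (a,p) (b,q) (c,p) (d,q) ∧ Ess1 R (SEreg R) ∧
        In4 (NWreg R) (a,r) (b,s) (c,r) (d,s))) →
    R (b,q) (a,p) → R (a,r) (b,s) → R (c,p) (d,q) → R (c,r) (d,s)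

/-- One half of A5 (stated for the given coordinate order). -/
def A5half (R : X₁ × X₂ → X₁ × X₂ → Prop) : Prop :=
  ∀ a b c d e g x₀ x₁ : X₁, ∀ p q y₀ y₁ πa πb πc πd : X₂,
    ((In4 (NWreg R) (a,p) (b,q) (c,p) (d,q) ∧ Ess1 R (NWreg R)) ∨
     (In4 (SEreg R) (a,p) (b,q) (c,p) (d,q) ∧ Ess1 R (SEreg R))) →
    (In4 (NWreg R) (a,y₀) (b,y₀) (c,y₁) (d,y₁) ∨
     In4 (SEreg R) (a,y₀) (b,y₀) (c,y₁) (d,y₁)) →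
    ((In4 (NWreg R) (x₀,πa) (x₀,πb) (x₁,πc) (x₁,πd) ∧ Ess2 R (NWreg R)) ∨
     (In4 (SEreg R) (x₀,πa) (x₀,πb) (x₁,πc) (x₁,πd) ∧ Ess2 R (SEreg R))) →
    (In4 (NWreg R) (e,πa) (g,πb) (e,πc) (g,πd) ∨
     In4 (SEreg R) (e,πa) (g,πb) (e,πc) (g,πd)) →
    R (b,q) (a,p) → R (c,p) (d,q) →
    IP R (a,y₀) (x₀,πa) → IP R (b,y₀) (x₀,πb) →
    IP R (c,y₁) (x₁,πc) → IP R (d,y₁) (x₁,πd) →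
    R (e,πa) (g,πb) → R (e,πc) (g,πd)

/-- The relation with the roles of the two coordinates exchanged. -/
def swapRel (R : X₁ × X₂ → X₁ × X₂ → Prop) : X₂ × X₁ → X₂ × X₁ → Prop :=
  fun x y => R (x.2, x.1) (y.2, y.1)

/-- A5 : the condition together with its symmetric (coordinate-exchanged) version. -/
def A5 (R : X₁ × X₂ → X₁ × X₂ → Prop) : Prop :=
  A5half R ∧ A5half (swapRel R)

/-- A6 : bi-independence. -/
def A6 (R : X₁ × X₂ → X₁ × X₂ → Prop) : Prop :=
  (∀ a b c d : X₁, ∀ p : X₂,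
    (In4 (SEreg R) (a,p) (b,p) (c,p) (d,p) ∨ In4 (NWreg R) (a,p) (b,p) (c,p) (d,p)) →
    SP R (a,p) (b,p) → (∃ q : X₂, SP R (c,q) (d,q)) → SP R (c,p) (d,p)) ∧
  (∀ p q r s : X₂, ∀ a : X₁,
    (In4 (SEreg R) (a,p) (a,q) (a,r) (a,s) ∨ In4 (NWreg R) (a,p) (a,q) (a,r) (a,s)) →
    SP R (a,p) (a,q) → (∃ b : X₁, SP R (b,r) (b,s)) → SP R (a,r) (a,s))

/-- A7 : both coordinates are essential on X. -/
def A7 (R : X₁ × X₂ → X₁ × X₂ → Prop) : Prop :=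
  Ess1 R Set.univ ∧ Ess2 R Set.univ

/-- A8 : restricted solvability. -/
def A8 (R : X₁ × X₂ → X₁ × X₂ → Prop) : Prop :=
  (∀ a : X₁, ∀ p r : X₂, ∀ y : X₁ × X₂,
    R (a,p) y → R y (a,r) → ∃ b : X₂, IP R (a,b) y) ∧
  (∀ p : X₂, ∀ a c : X₁, ∀ y : X₁ × X₂,
    R (a,p) y → R y (c,p) → ∃ b : X₁, IP R (b,p) y)

/-- `S` is an interval of integers. -/
def IsIntervalZ (S : Set ℤ) : Prop :=
  ∀ i j k : ℤ, i ≤ j → j ≤ k → i ∈ S → k ∈ S → j ∈ S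

/-- Standard sequence on X₁. -/
def StdSeq1 (R : X₁ × X₂ → X₁ × X₂ → Prop) (S : Set ℤ) (g : ℤ → X₁) (y₀ y₁ : X₂) : Prop :=
  IsIntervalZ S ∧ ¬ (Ge2 R y₀ y₁ ∧ Ge2 R y₁ y₀) ∧
  ∀ i, i ∈ S → (i+1) ∈ S → IP R (g i, y₀) (g (i+1), y₁)

def BoundedSeq1 (R : X₁ × X₂ → X₁ × X₂ → Prop) (S : Set ℤ) (g : ℤ → X₁) (y₀ : X₂) : Prop :=
  ∃ u v : X₁ × X₂, ∀ i ∈ S, R u (g i, y₀) ∧ R (g i, y₀) v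

/-- Standard sequence on X₂. -/
def StdSeq2 (R : X₁ × X₂ → X₁ × X₂ → Prop) (S : Set ℤ) (h : ℤ → X₂) (x₀ x₁ : X₁) : Prop :=
  IsIntervalZ S ∧ ¬ (Ge1 R x₀ x₁ ∧ Ge1 R x₁ x₀) ∧
  ∀ i, i ∈ S → (i+1) ∈ S → IP R (x₀, h i) (x₁, h (i+1))

def BoundedSeq2 (R : X₁ × X₂ → X₁ × X₂ → Prop) (S : Set ℤ) (h : ℤ → X₂) (x₀ : X₁) : Prop :=
  ∃ u v : X₁ × X₂, ∀ i ∈ S, R u (x₀, h i) ∧ R (x₀, h i) v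

/-- A9 : Archimedean axiom. -/
def A9 (R : X₁ × X₂ → X₁ × X₂ → Prop) : Prop :=
  (∀ z ∈ NWreg R, ∀ (S : Set ℤ) (g : ℤ → X₁) (y₀ y₁ : X₂),
    StdSeq1 R S g y₀ y₁ → BoundedSeq1 R S g y₀ →
    (∀ i ∈ S, (g i, y₀) ∈ NWz R z ∧ (g i, y₁) ∈ NWz R z) → S.Finite) ∧
  (∀ z ∈ SEreg R, ∀ (S : Set ℤ) (g : ℤ → X₁) (y₀ y₁ : X₂),
    StdSeq1 R S g y₀ y₁ → BoundedSeq1 R S g y₀ →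
    (∀ i ∈ S, (g i, y₀) ∈ SEz R z ∧ (g i, y₁) ∈ SEz R z) → S.Finite) ∧
  (∀ z ∈ NWreg R, ∀ (S : Set ℤ) (h : ℤ → X₂) (x₀ x₁ : X₁),
    StdSeq2 R S h x₀ x₁ → BoundedSeq2 R S h x₀ →
    (∀ i ∈ S, (x₀, h i) ∈ NWz R z ∧ (x₁, h i) ∈ NWz R z) → S.Finite) ∧
  (∀ z ∈ SEreg R, ∀ (S : Set ℤ) (h : ℤ → X₂) (x₀ x₁ : X₁),
    StdSeq2 R S h x₀ x₁ → BoundedSeq2 R S h x₀ →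
    (∀ i ∈ S, (x₀, h i) ∈ SEz R z ∧ (x₁, h i) ∈ SEz R z) → S.Finite)

/-- Structural assumption. -/
def Structural (R : X₁ × X₂ → X₁ × X₂ → Prop) : Prop :=
  (∀ a b : X₁, a ≠ b → ¬ ∀ p : X₂, IP R (a,p) (b,p)) ∧
  (∀ p q : X₂, p ≠ q → ¬ ∀ a : X₁, IP R (a,p) (a,q))

/-- Order density. -/
def OrderDense (R : X₁ × X₂ → X₁ × X₂ → Prop) : Prop :=
  ∀ x y : X₁ × X₂, SP R x y → ∃ z : X₁ × X₂, SP R x z ∧ SP R z y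

/-- Closedness of SE and NW. -/
def Closedness (R : X₁ × X₂ → X₁ × X₂ → Prop) : Prop :=
  (∀ a b : X₁, ∀ p : X₂, (a,p) ∉ NWreg R → (b,p) ∉ SEreg R →
    ∃ c : X₁, (c,p) ∈ Theta R) ∧
  (∀ a : X₁, ∀ p q : X₂, (a,p) ∉ NWreg R → (a,q) ∉ SEreg R →
    ∃ r : X₂, (a,r) ∈ Theta R)

/-- A capacity on the two-element set (coordinate 1 ↦ `0`, coordinate 2 ↦ `1`). -/
structure Capacity where
  ν : Set (Fin 2) → ℝ
  empty' : ν ∅ = 0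
  mono' : ∀ A B : Set (Fin 2), A ⊆ B → ν A ≤ ν B
  norm' : ν Set.univ = 1

/-- Two-point Choquet integral. -/
noncomputable def Choq (c : Capacity) (t₁ t₂ : ℝ) : ℝ :=
  if t₂ ≤ t₁ then c.ν {0} * t₁ + (1 - c.ν {0}) * t₂
  else (1 - c.ν {1}) * t₁ + c.ν {1} * t₂

/-- `ν` together with `(f₁, f₂)` represents `R`. -/
def Represents (c : Capacity) (f₁ : X₁ → ℝ) (f₂ : X₂ → ℝ)
    (R : X₁ × X₂ → X₁ × X₂ → Prop) : Prop :=
  ∀ x y : X₁ × X₂, R x y ↔ Choq c (f₁ y.1) (f₂ y.2) ≤ Choq c (f₁ x.1) (f₂ x.2)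

/-- `(V₁, V₂)` additively represents `R` on `A`. -/
def AddRep (R : X₁ × X₂ → X₁ × X₂ → Prop) (V₁ : X₁ → ℝ) (V₂ : X₂ → ℝ)
    (A : Set (X₁ × X₂)) : Prop :=
  ∀ x ∈ A, ∀ y ∈ A, (R x y ↔ V₁ y.1 + V₂ y.2 ≤ V₁ x.1 + V₂ x.2)

/-- `Φ` represents `R` on `A`. -/
def RepOn (R : X₁ × X₂ → X₁ × X₂ → Prop) (Φ : X₁ × X₂ → ℝ) (A : Set (X₁ × X₂)) : Prop :=
  ∀ x ∈ A, ∀ y ∈ A, (R x y ↔ Φ y ≤ Φ x)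


/-- `S` union of non-extreme SE cones. -/
def SEstar (R : X₁ × X₂ → X₁ × X₂ → Prop) : Set (X₁ × X₂) :=
  ⋃ z ∈ Theta R \ SEext R, SEz R z

/-- Union of non-extreme NW cones. -/
def NWstar (R : X₁ × X₂ → X₁ × X₂ → Prop) : Set (X₁ × X₂) :=
  ⋃ z ∈ Theta R \ NWext R, NWz R z

/-- First coordinates appearing both in `SEstar` and `NWstar`. -/
def D1 (R : X₁ × X₂ → X₁ × X₂ → Prop) : Set X₁ :=
  {a | (∃ p : X₂, (a,p) ∈ SEstar R) ∧ (∃ q : X₂, (a,q) ∈ NWstar R)}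

/-- Second coordinates appearing both in `SEstar` and `NWstar`. -/
def D2 (R : X₁ × X₂ → X₁ × X₂ → Prop) : Set X₂ :=
  {p | (∃ a : X₁, (a,p) ∈ SEstar R) ∧ (∃ b : X₁, (b,p) ∈ NWstar R)}

end ChoquetAxioms

lemma choqA (c : Capacity) {t₁ t₂ : ℝ} (h : t₂ ≤ t₁) :
    Choq c t₁ t₂ = c.ν {0} * t₁ + (1 - c.ν {0}) * t₂ := if_pos h

lemma choqB (c : Capacity) {t₁ t₂ : ℝ} (h : t₁ ≤ t₂) :
    Choq c t₁ t₂ = (1 - c.ν {1}) * t₁ + c.ν {1} * t₂ := by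
  unfold Choq
  split
  · rename_i h'
    have ht : t₁ = t₂ := le_antisymm h h'
    rw [ht]; ring
  · rfl

lemma cap_nonneg (c : Capacity) (A : Set (Fin 2)) : 0 ≤ c.ν A := by
  have := c.mono' ∅ A (Set.empty_subset A)
  rw [c.empty'] at this; exact this

lemma cap_le_one (c : Capacity) (A : Set (Fin 2)) : c.ν A ≤ 1 := by
  have := c.mono' A Set.univ (Set.subset_univ A)
  rw [c.norm'] at this; exact this

set_option maxHeartbeats 1000000 in
/-- Necessity of axiom A5 for the Choquet representation. -/
theorem A5_necessary {X₁ X₂ : Type*} [Nonempty X₁] [Nonempty X₂]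
    (m : Capacity) (f₁ : X₁ → ℝ) (f₂ : X₂ → ℝ)
    (R : X₁ × X₂ → X₁ × X₂ → Prop) (hrep : Represents m f₁ f₂ R)
    (a b c d e g x₀ x₁ : X₁) (p q y₀ y₁ πa πb πc πd : X₂)
    (hg1 : (In4 {x : X₁ × X₂ | f₂ x.2 ≤ f₁ x.1} (a,p) (b,q) (c,p) (d,q) ∧
              0 < m.ν {0}) ∨
           (In4 {x : X₁ × X₂ | f₁ x.1 ≤ f₂ x.2} (a,p) (b,q) (c,p) (d,q) ∧
              0 < 1 - m.ν {1}))
    (hg2 : In4 {x : X₁ × X₂ | f₂ x.2 ≤ f₁ x.1} (a,y₀) (b,y₀) (c,y₁) (d,y₁) ∨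
           In4 {x : X₁ × X₂ | f₁ x.1 ≤ f₂ x.2} (a,y₀) (b,y₀) (c,y₁) (d,y₁))
    (hg3 : (In4 {x : X₁ × X₂ | f₂ x.2 ≤ f₁ x.1} (x₀,πa) (x₀,πb) (x₁,πc) (x₁,πd) ∧
              0 < 1 - m.ν {0}) ∨
           (In4 {x : X₁ × X₂ | f₁ x.1 ≤ f₂ x.2} (x₀,πa) (x₀,πb) (x₁,πc) (x₁,πd) ∧
              0 < m.ν {1}))
    (hg4 : In4 {x : X₁ × X₂ | f₂ x.2 ≤ f₁ x.1} (e,πa) (g,πb) (e,πc) (g,πd) ∨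
           In4 {x : X₁ × X₂ | f₁ x.1 ≤ f₂ x.2} (e,πa) (g,πb) (e,πc) (g,πd))
    (H1 : R (b,q) (a,p)) (H2 : R (c,p) (d,q))
    (H3 : IP R (a,y₀) (x₀,πa)) (H4 : IP R (b,y₀) (x₀,πb))
    (H5 : IP R (c,y₁) (x₁,πc)) (H6 : IP R (d,y₁) (x₁,πd))
    (H7 : R (e,πa) (g,πb)) :
    R (e,πc) (g,πd) := by
  simp only [In4, Set.mem_setOf_eq] at hg1 hg2 hg3 hg4
  have hν00 : 0 ≤ m.ν {0} := cap_nonneg m _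
  have hν01 : m.ν {0} ≤ 1 := cap_le_one m _
  have hν10 : 0 ≤ m.ν {1} := cap_nonneg m _
  have hν11 : m.ν {1} ≤ 1 := cap_le_one m _
  have h1 : Choq m (f₁ a) (f₂ p) ≤ Choq m (f₁ b) (f₂ q) := (hrep (b,q) (a,p)).1 H1
  have h2 : Choq m (f₁ d) (f₂ q) ≤ Choq m (f₁ c) (f₂ p) := (hrep (c,p) (d,q)).1 H2
  have e3 : Choq m (f₁ a) (f₂ y₀) = Choq m (f₁ x₀) (f₂ πa) :=
    le_antisymm ((hrep _ _).1 H3.2) ((hrep _ _).1 H3.1)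
  have e4 : Choq m (f₁ b) (f₂ y₀) = Choq m (f₁ x₀) (f₂ πb) :=
    le_antisymm ((hrep _ _).1 H4.2) ((hrep _ _).1 H4.1)
  have e5 : Choq m (f₁ c) (f₂ y₁) = Choq m (f₁ x₁) (f₂ πc) :=
    le_antisymm ((hrep _ _).1 H5.2) ((hrep _ _).1 H5.1)
  have e6 : Choq m (f₁ d) (f₂ y₁) = Choq m (f₁ x₁) (f₂ πd) :=
    le_antisymm ((hrep _ _).1 H6.2) ((hrep _ _).1 H6.1)
  have h7 : Choq m (f₁ g) (f₂ πb) ≤ Choq m (f₁ e) (f₂ πa) := (hrep (e,πa) (g,πb)).1 H7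
  -- Step 1: f₁ a + f₁ d ≤ f₁ b + f₁ c
  have ineq1 : f₁ a + f₁ d ≤ f₁ b + f₁ c := by
    rcases hg1 with ⟨⟨m1, m2, m3, m4⟩, hpos⟩ | ⟨⟨m1, m2, m3, m4⟩, hpos⟩
    · rw [choqA m m1, choqA m m2] at h1
      rw [choqA m m4, choqA m m3] at h2
      have hS : 0 ≤ m.ν {0} * (f₁ b + f₁ c - (f₁ a + f₁ d)) := by
        ring_nf; ring_nf at h1 h2; linarith
      linarith [(mul_nonneg_iff_of_pos_left hpos).mp hS]
    · rw [choqB m m1, choqB m m2] at h1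
      rw [choqB m m4, choqB m m3] at h2
      have hS : 0 ≤ (1 - m.ν {1}) * (f₁ b + f₁ c - (f₁ a + f₁ d)) := by
        ring_nf; ring_nf at h1 h2; linarith
      linarith [(mul_nonneg_iff_of_pos_left hpos).mp hS]
  -- Step 2: f₂ πd - f₂ πc ≤ f₂ πb - f₂ πa
  have key : f₂ πd - f₂ πc ≤ f₂ πb - f₂ πa := by
    rcases hg2 with ⟨n1, n2, n3, n4⟩ | ⟨n1, n2, n3, n4⟩ <;>
      rcases hg3 with ⟨⟨k1, k2, k3, k4⟩, hpos⟩ | ⟨⟨k1, k2, k3, k4⟩, hpos⟩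
    · rw [choqA m n1, choqA m k1] at e3
      rw [choqA m n2, choqA m k2] at e4
      rw [choqA m n3, choqA m k3] at e5
      rw [choqA m n4, choqA m k4] at e6
      have hsum : (1 - m.ν {0}) * (f₂ πb + f₂ πc - (f₂ πa + f₂ πd)) =
          m.ν {0} * (f₁ b + f₁ c - (f₁ a + f₁ d)) := by linear_combination e3 - e4 + e6 - e5
      have h0 : 0 ≤ m.ν {0} * (f₁ b + f₁ c - (f₁ a + f₁ d)) :=
        mul_nonneg hν00 (by linarith)
      have hS : 0 ≤ f₂ πb + f₂ πc - (f₂ πa + f₂ πd) :=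
        (mul_nonneg_iff_of_pos_left hpos).mp (by rw [hsum]; exact h0)
      linarith
    · rw [choqA m n1, choqB m k1] at e3
      rw [choqA m n2, choqB m k2] at e4
      rw [choqA m n3, choqB m k3] at e5
      rw [choqA m n4, choqB m k4] at e6
      have hsum : m.ν {1} * (f₂ πb + f₂ πc - (f₂ πa + f₂ πd)) =
          m.ν {0} * (f₁ b + f₁ c - (f₁ a + f₁ d)) := by linear_combination e3 - e4 + e6 - e5
      have h0 : 0 ≤ m.ν {0} * (f₁ b + f₁ c - (f₁ a + f₁ d)) :=
        mul_nonneg hν00 (by linarith)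
      have hS : 0 ≤ f₂ πb + f₂ πc - (f₂ πa + f₂ πd) :=
        (mul_nonneg_iff_of_pos_left hpos).mp (by rw [hsum]; exact h0)
      linarith
    · rw [choqB m n1, choqA m k1] at e3
      rw [choqB m n2, choqA m k2] at e4
      rw [choqB m n3, choqA m k3] at e5
      rw [choqB m n4, choqA m k4] at e6
      have hsum : (1 - m.ν {0}) * (f₂ πb + f₂ πc - (f₂ πa + f₂ πd)) =
          (1 - m.ν {1}) * (f₁ b + f₁ c - (f₁ a + f₁ d)) := by
        linear_combination e3 - e4 + e6 - e5
      have h0 : 0 ≤ (1 - m.ν {1}) * (f₁ b + f₁ c - (f₁ a + f₁ d)) :=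
        mul_nonneg (by linarith) (by linarith)
      have hS : 0 ≤ f₂ πb + f₂ πc - (f₂ πa + f₂ πd) :=
        (mul_nonneg_iff_of_pos_left hpos).mp (by rw [hsum]; exact h0)
      linarith
    · rw [choqB m n1, choqB m k1] at e3
      rw [choqB m n2, choqB m k2] at e4
      rw [choqB m n3, choqB m k3] at e5
      rw [choqB m n4, choqB m k4] at e6
      have hsum : m.ν {1} * (f₂ πb + f₂ πc - (f₂ πa + f₂ πd)) =
          (1 - m.ν {1}) * (f₁ b + f₁ c - (f₁ a + f₁ d)) := by
        linear_combination e3 - e4 + e6 - e5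
      have h0 : 0 ≤ (1 - m.ν {1}) * (f₁ b + f₁ c - (f₁ a + f₁ d)) :=
        mul_nonneg (by linarith) (by linarith)
      have hS : 0 ≤ f₂ πb + f₂ πc - (f₂ πa + f₂ πd) :=
        (mul_nonneg_iff_of_pos_left hpos).mp (by rw [hsum]; exact h0)
      linarith
  -- Step 3
  refine (hrep (e,πc) (g,πd)).2 ?_
  rcases hg4 with ⟨l1, l2, l3, l4⟩ | ⟨l1, l2, l3, l4⟩
  · rw [choqA m l1, choqA m l2] at h7
    show Choq m (f₁ g) (f₂ πd) ≤ Choq m (f₁ e) (f₂ πc)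
    rw [choqA m l4, choqA m l3]
    have mk := mul_le_mul_of_nonneg_left key (by linarith : (0:ℝ) ≤ 1 - m.ν {0})
    ring_nf; ring_nf at mk h7; linarith
  · rw [choqB m l1, choqB m l2] at h7
    show Choq m (f₁ g) (f₂ πd) ≤ Choq m (f₁ e) (f₂ πc)
    rw [choqB m l4, choqB m l3]
    have mk := mul_le_mul_of_nonneg_left key hν10
    ring_nf; ring_nf at mk h7; linarith
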